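/- Consider a network of n agents where the adversary set A is an f'-fraction local set of Byzantine adversaries with f' ≤ f, and each normal agent i updates its state according to ARC-P with parameter f ∈ [0,1/2]. Let F_i(t) = ⌊f·d_i(t)⌋ and B = β(n − 1 − min_{i∈N, t≥0} F_i(t)). Then for every normal agent i and every t ≥ 0, the ARC-P update satisfies B(m_N(t) − x_i(t)) ≤ Σ_{j ∈ N_i^in(t)\R_i(t)} w_{(j,i)}(t)(x_{(j,i)}(t) − x_i(t)) ≤ B(M_N(t) − x_i(t)); consequently every normal state satisfies x_i(t) ∈ I_0 = [m_N(0), M_N(0)] for all t ≥ 0, i.e., the safety condition of CTRAC is ensured. -/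

import Mathlib

open Finset Filter Topology MeasureTheory

namespace ARCP

variable {n : ℕ}

/-- `R` is a valid ARC-P removal of the (up to) `F` largest neighboring values:
either there are fewer than `F` values strictly larger than the node's own value `xi`
and all of those are removed, or there are at least `F` such values and precisely a set
of `F` largest values is removed. -/
def RemovalHigh (Nin : Finset (Fin n)) (v : Fin n → ℝ) (xi : ℝ) (F : ℕ)
    (R : Finset (Fin n)) : Prop :=
  R ⊆ Nin ∧
    (((Nin.filter fun j => xi < v j).card < F ∧ R = Nin.filter fun j => xi < v j) ∨
      (F ≤ (Nin.filter fun j => xi < v j).card ∧ R.card = F ∧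
        ∀ j ∈ R, ∀ k ∈ Nin \ R, v k ≤ v j))

/-- `R` is a valid ARC-P removal of the (up to) `F` smallest neighboring values. -/
def RemovalLow (Nin : Finset (Fin n)) (v : Fin n → ℝ) (xi : ℝ) (F : ℕ)
    (R : Finset (Fin n)) : Prop :=
  R ⊆ Nin ∧
    (((Nin.filter fun j => v j < xi).card < F ∧ R = Nin.filter fun j => v j < xi) ∨
      (F ≤ (Nin.filter fun j => v j < xi).card ∧ R.card = F ∧
        ∀ j ∈ R, ∀ k ∈ Nin \ R, v j ≤ v k))

/-- `R` is a valid set of in-neighbors removed by the ARC-P rule with threshold `F`. -/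
def IsARCPRemoval (Nin : Finset (Fin n)) (v : Fin n → ℝ) (xi : ℝ) (F : ℕ)
    (R : Finset (Fin n)) : Prop :=
  ∃ Rhi Rlo : Finset (Fin n),
    R = Rhi ∪ Rlo ∧ RemovalHigh Nin v xi F Rhi ∧ RemovalLow Nin v xi F Rlo

/-- The ARC-P control input: `∑_{j ∈ Nin \ R} w j * (v j - xi)`. -/
def arcpUpdate (Nin R : Finset (Fin n)) (w : Fin n → ℝ) (v : Fin n → ℝ) (xi : ℝ) : ℝ :=
  ∑ j ∈ Nin \ R, w j * (v j - xi)

end ARCP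

private lemma sup'_neg_eq {n : ℕ} (s : Finset (Fin n)) (H : s.Nonempty) (g : Fin n → ℝ) :
    (s.sup' H fun j => -g j) = -(s.inf' H g) := by
  apply le_antisymm
  · exact Finset.sup'_le _ _ fun j hj => neg_le_neg (Finset.inf'_le _ hj)
  · obtain ⟨j, hj, hval⟩ := Finset.exists_mem_eq_inf' H g
    rw [hval]
    exact Finset.le_sup' (fun j => -g j) hj

private lemma gronwall_pos (g : ℝ → ℝ) (T B : ℝ) (hB : 0 ≤ B)
    (hg : ContinuousOn g (Set.Icc 0 T))
    (hineq : ∀ s t : ℝ, 0 ≤ s → s ≤ t → t ≤ T → g s - g t ≤ B * ∫ r in s..t, g r)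
    (h0 : 0 < g 0) : ∀ t, 0 ≤ t → t ≤ T → 0 < g t := by
  by_contra hcon
  push_neg at hcon
  obtain ⟨t₀, ht₀0, ht₀T, hgt₀⟩ := hcon
  set S : Set ℝ := {t | t ∈ Set.Icc (0:ℝ) t₀ ∧ g t ≤ 0} with hS
  have hgcont : ContinuousOn g (Set.Icc 0 t₀) := hg.mono (Set.Icc_subset_Icc le_rfl ht₀T)
  have hSclosed : IsClosed S := by
    have : S = Set.Icc (0:ℝ) t₀ ∩ g ⁻¹' Set.Iic 0 := by
      ext t; simp [hS, Set.mem_Icc]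
    rw [this]
    exact hgcont.preimage_isClosed_of_isClosed isClosed_Icc isClosed_Iic
  have hSne : S.Nonempty := ⟨t₀, ⟨ht₀0, le_rfl⟩, hgt₀⟩
  have hSbdd : BddBelow S := ⟨0, fun t ht => ht.1.1⟩
  set s₀ := sInf S with hs₀
  have hs₀S : s₀ ∈ S := hSclosed.csInf_mem hSne hSbdd
  have hs₀0 : 0 ≤ s₀ := hs₀S.1.1
  have hs₀t₀ : s₀ ≤ t₀ := hs₀S.1.2
  obtain ⟨c, hc, hmax⟩ := (isCompact_Icc (a := (0:ℝ)) (b := s₀)).exists_isMaxOn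
    (Set.nonempty_Icc.mpr hs₀0) (hgcont.mono (Set.Icc_subset_Icc le_rfl hs₀t₀))
  set G := g c with hG
  have hiter : ∀ m : ℕ, ∀ s, 0 ≤ s → s ≤ s₀ → g s ≤ G * (B * (s₀ - s)) ^ m / m.factorial := by
    intro m
    induction m with
    | zero => intro s hs0 hss; simpa using hmax ⟨hs0, hss⟩
    | succ m ih =>
      intro s hs0 hss
      have hint1 : IntervalIntegrable g volume s s₀ := by
        apply ContinuousOn.intervalIntegrable
        rw [Set.uIcc_of_le hss]
        exact (hgcont.mono (Set.Icc_subset_Icc le_rfl hs₀t₀)).mono (Set.Icc_subset_Icc hs0 le_rfl)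
      have hint2 : IntervalIntegrable (fun r => G * B ^ m / m.factorial * (s₀ - r) ^ m)
          volume s s₀ := (Continuous.intervalIntegrable (by continuity) s s₀)
      have hmono : (∫ r in s..s₀, g r) ≤ ∫ r in s..s₀, G * B ^ m / m.factorial * (s₀ - r) ^ m := by
        apply intervalIntegral.integral_mono_on hss hint1 hint2
        intro r hr
        have := ih r (hs0.trans hr.1) hr.2
        calc g r ≤ G * (B * (s₀ - r)) ^ m / m.factorial := this
          _ = G * B ^ m / m.factorial * (s₀ - r) ^ m := by rw [mul_pow]; ring
      have hcomp : (∫ r in s..s₀, G * B ^ m / m.factorial * (s₀ - r) ^ m)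
          = G * B ^ m / m.factorial * ((s₀ - s) ^ (m + 1) / (m + 1)) := by
        rw [intervalIntegral.integral_const_mul]
        congr 1
        have := intervalIntegral.integral_comp_sub_left (a := s) (b := s₀)
          (fun x => x ^ m) s₀
        rw [this]
        simp [integral_pow]
      have hkey := hineq s s₀ hs0 hss (hs₀t₀.trans ht₀T)
      have hgs₀ : g s₀ ≤ 0 := hs₀S.2
      have h5 : g s ≤ B * (G * B ^ m / m.factorial * ((s₀ - s) ^ (m + 1) / (m + 1))) := by
        have := mul_le_mul_of_nonneg_left hmono hB
        rw [hcomp] at this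
        linarith
      calc g s ≤ B * (G * B ^ m / m.factorial * ((s₀ - s) ^ (m + 1) / (m + 1))) := h5
        _ = G * (B * (s₀ - s)) ^ (m + 1) / (m + 1).factorial := by
          rw [mul_pow, Nat.factorial_succ]
          push_cast
          have h1 : (m.factorial : ℝ) ≠ 0 := by positivity
          field_simp
          ring
  have htend : Tendsto (fun m : ℕ => G * (B * s₀) ^ m / m.factorial) atTop (𝓝 0) := by
    have h1 := FloorSemiring.tendsto_pow_div_factorial_atTop (K := ℝ) (B * s₀)
    have h2 := h1.const_mul G
    simpa [mul_div_assoc] using h2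
  have : g 0 ≤ 0 := by
    refine ge_of_tendsto htend (Eventually.of_forall fun m => ?_)
    simpa using hiter m 0 le_rfl hs₀0
  linarith

private lemma arcp_upper {n : ℕ} (Nin R Rhi : Finset (Fin n)) (v w : Fin n → ℝ)
    (xi M : ℝ) (F Fm : ℕ) (β : ℝ) (hβ : 0 ≤ β)
    (hw : ∀ j ∈ Nin, 0 ≤ w j ∧ w j ≤ β)
    (hhi : ARCP.RemovalHigh Nin v xi F Rhi) (hsub : Rhi ⊆ R)
    (hxiM : xi ≤ M)
    (hadv : (Nin.filter fun j => M < v j).card ≤ F)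
    (hH : (Nin.filter fun j => xi < v j).card + 1 ≤ n)
    (hFmF : Fm ≤ F) (hFmn : Fm + 1 ≤ n) :
    ARCP.arcpUpdate Nin R w v xi ≤ β * ((n : ℝ) - 1 - (Fm : ℝ)) * (M - xi) := by
  classical
  obtain ⟨hRhiN, hcase⟩ := hhi
  set H := Nin.filter fun j => xi < v j with hHdef
  set P := (Nin \ R).filter fun j => xi < v j with hPdef
  have hPH : P ⊆ H := Finset.filter_subset_filter _ (Finset.sdiff_subset)
  have hPR : ∀ j ∈ P, j ∉ Rhi := by
    intro j hj hjR
    have := Finset.mem_filter.mp hj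
    exact (Finset.mem_sdiff.mp this.1).2 (hsub hjR)
  have key1 : ∀ j ∈ P, v j ≤ M := by
    intro j hj
    by_contra h
    push_neg at h
    have hjNin : j ∈ Nin := (Finset.mem_sdiff.mp (Finset.mem_filter.mp hj).1).1
    rcases hcase with ⟨hlt, hEq⟩ | ⟨hge, hcard, hdom⟩
    · exact hPR j hj (hEq ▸ hPH hj)
    · have hins : insert j Rhi ⊆ Nin.filter fun k => M < v k := by
        intro a ha
        rcases Finset.mem_insert.mp ha with rfl | haR
        · exact Finset.mem_filter.mpr ⟨hjNin, h⟩
        · have hjk : j ∈ Nin \ Rhi := Finset.mem_sdiff.mpr ⟨hjNin, hPR j hj⟩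
          have := hdom a haR j hjk
          exact Finset.mem_filter.mpr ⟨hRhiN haR, lt_of_lt_of_le h this⟩
      have h1 : F + 1 ≤ (Nin.filter fun k => M < v k).card := by
        have := Finset.card_le_card hins
        rwa [Finset.card_insert_of_notMem (hPR j hj), hcard] at this
      omega
  have key2 : P.card + Fm + 1 ≤ n := by
    rcases hcase with ⟨hlt, hEq⟩ | ⟨hge, hcard, hdom⟩
    · have hPempty : P = ∅ := by
        apply Finset.eq_empty_of_forall_notMem
        intro j hj
        exact hPR j hj (hEq ▸ hPH hj)
      rw [hPempty]
      simpa using hFmn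
    · have hRhiH : Rhi ⊆ H := by
        intro a ha
        by_contra hnot
        have hane : (H \ Rhi).Nonempty := by
          rw [← Finset.card_pos]
          have e1 : (H \ Rhi).card + (H ∩ Rhi).card = H.card :=
            Finset.card_sdiff_add_card_inter H Rhi
          have e2 : H ∩ Rhi ⊆ Rhi.erase a := by
            intro k hk
            have hk' := Finset.mem_inter.mp hk
            refine Finset.mem_erase.mpr ⟨?_, hk'.2⟩
            rintro rfl
            exact hnot hk'.1
          have e3 : (H ∩ Rhi).card ≤ F - 1 := by
            have := Finset.card_le_card e2
            rwa [Finset.card_erase_of_mem ha, hcard] at this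
          have hF1 : 1 ≤ F := by
            by_contra hF0
            push_neg at hF0
            interval_cases F
            · exact absurd hcard (by
                intro hc
                exact hnot (False.elim (by
                  have : Rhi = ∅ := Finset.card_eq_zero.mp hc
                  exact absurd ha (this ▸ Finset.notMem_empty a))))
          omega
        obtain ⟨k, hk⟩ := hane
        have hk' := Finset.mem_sdiff.mp hk
        have hkH := Finset.mem_filter.mp hk'.1
        have := hdom a ha k (Finset.mem_sdiff.mpr ⟨hkH.1, hk'.2⟩)
        have hva : ¬ xi < v a := by
          intro hvv
          exact hnot (Finset.mem_filter.mpr ⟨hRhiN ha, hvv⟩)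
        push_neg at hva
        linarith [hkH.2]
      have hPsub : P ⊆ H \ Rhi := fun j hj => Finset.mem_sdiff.mpr ⟨hPH hj, hPR j hj⟩
      have h1 := Finset.card_le_card hPsub
      rw [Finset.card_sdiff_of_subset hRhiH, hcard] at h1
      omega
  have hsplit := Finset.sum_filter_add_sum_filter_not (Nin \ R) (fun j => xi < v j)
    (fun j => w j * (v j - xi))
  have hneg : (∑ j ∈ (Nin \ R).filter fun j => ¬ xi < v j, w j * (v j - xi)) ≤ 0 := by
    apply Finset.sum_nonpos
    intro j hj
    have hj' := Finset.mem_filter.mp hj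
    have hjNin : j ∈ Nin := (Finset.mem_sdiff.mp hj'.1).1
    have hwj := hw j hjNin
    push_neg at hj'
    exact mul_nonpos_iff.mpr (Or.inl ⟨hwj.1, sub_nonpos.mpr hj'.2⟩)
  have hposb : (∑ j ∈ P, w j * (v j - xi)) ≤ P.card * (β * (M - xi)) := by
    rw [← nsmul_eq_mul, ← Finset.sum_const]
    apply Finset.sum_le_sum
    intro j hj
    have hj' := Finset.mem_filter.mp hj
    have hjNin : j ∈ Nin := (Finset.mem_sdiff.mp hj'.1).1
    have hwj := hw j hjNin
    have hvj := key1 j hj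
    calc w j * (v j - xi) ≤ β * (v j - xi) :=
          mul_le_mul_of_nonneg_right hwj.2 (by linarith [hj'.2])
      _ ≤ β * (M - xi) := mul_le_mul_of_nonneg_left (by linarith) hβ
  have hcast : (P.card : ℝ) ≤ (n : ℝ) - 1 - (Fm : ℝ) := by
    have : (P.card : ℝ) + (Fm : ℝ) + 1 ≤ (n : ℝ) := by exact_mod_cast key2
    linarith
  have hMxi : 0 ≤ β * (M - xi) := mul_nonneg hβ (by linarith)
  have hfinal : (P.card : ℝ) * (β * (M - xi)) ≤ ((n : ℝ) - 1 - (Fm : ℝ)) * (β * (M - xi)) :=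
    mul_le_mul_of_nonneg_right hcast hMxi
  have hsum : ARCP.arcpUpdate Nin R w v xi
      = (∑ j ∈ P, w j * (v j - xi))
        + ∑ j ∈ (Nin \ R).filter (fun j => ¬ xi < v j), w j * (v j - xi) := by
    rw [ARCP.arcpUpdate, ← hsplit]
  rw [hsum]
  calc (∑ j ∈ P, w j * (v j - xi))
        + (∑ j ∈ (Nin \ R).filter (fun j => ¬ xi < v j), w j * (v j - xi))
      ≤ (P.card : ℝ) * (β * (M - xi)) := by linarith
    _ ≤ ((n : ℝ) - 1 - (Fm : ℝ)) * (β * (M - xi)) := hfinal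
    _ = β * ((n : ℝ) - 1 - (Fm : ℝ)) * (M - xi) := by ring

private lemma safety_upper {n : ℕ} (Normal : Finset (Fin n)) (hNe : Normal.Nonempty)
    (x u : Fin n → ℝ → ℝ) (B : ℝ) (hB : 0 ≤ B)
    (hcont : ∀ i ∈ Normal, ∀ T : ℝ, 0 ≤ T → ContinuousOn (x i) (Set.Icc 0 T))
    (hint : ∀ i ∈ Normal, ∀ t : ℝ, 0 ≤ t → IntervalIntegrable (u i) volume 0 t)
    (hsol : ∀ i ∈ Normal, ∀ t : ℝ, 0 ≤ t → x i t = x i 0 + ∫ s in (0:ℝ)..t, u i s)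
    (hbound : ∀ i ∈ Normal, ∀ t : ℝ, 0 ≤ t →
      u i t ≤ B * ((Normal.sup' hNe fun j => x j t) - x i t)) :
    ∀ i ∈ Normal, ∀ t : ℝ, 0 ≤ t → x i t ≤ Normal.sup' hNe fun j => x j 0 := by
  intro i hi t0 ht0
  set M0 := Normal.sup' hNe fun j => x j 0 with hM0
  by_contra hcon
  push_neg at hcon
  set ε := (x i t0 - M0) / 2 with hε
  have hεpos : 0 < ε := by simp only [hε]; linarith
  set C := M0 + ε with hC
  have hit0C : C < x i t0 := by simp only [hC, hε]; linarith
  set S : Set ℝ := {t | t ∈ Set.Icc (0:ℝ) t0 ∧ ∃ j ∈ Normal, C ≤ x j t} with hS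
  have hSne : S.Nonempty := ⟨t0, ⟨ht0, le_rfl⟩, i, hi, hit0C.le⟩
  have hSclosed : IsClosed S := by
    have : S = ⋃ j ∈ Normal, (Set.Icc (0:ℝ) t0 ∩ (x j) ⁻¹' Set.Ici C) := by
      ext t
      simp only [hS, Set.mem_setOf_eq, Set.mem_iUnion, Set.mem_inter_iff, Set.mem_preimage,
        Set.mem_Ici, exists_prop]
      tauto
    rw [this]
    apply isClosed_biUnion_finset
    intro j hj
    exact (hcont j hj t0 ht0).preimage_isClosed_of_isClosed isClosed_Icc isClosed_Ici
  have hSbdd : BddBelow S := ⟨0, fun t ht => ht.1.1⟩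
  obtain ⟨ts, htsS, htsmin⟩ : ∃ ts, ts ∈ S ∧ ∀ s ∈ S, ts ≤ s :=
    ⟨sInf S, hSclosed.csInf_mem hSne hSbdd, fun s hs => csInf_le hSbdd hs⟩
  have hts0 : 0 ≤ ts := htsS.1.1
  have htst0 : ts ≤ t0 := htsS.1.2
  obtain ⟨js, hjs, hjsC⟩ := htsS.2
  have hlt : ∀ s, 0 ≤ s → s < ts → ∀ j ∈ Normal, x j s < C := by
    intro s hs0 hsts j hj
    by_contra h
    push_neg at h
    exact absurd (htsmin s ⟨⟨hs0, hsts.le.trans htst0⟩, j, hj, h⟩) (not_le.mpr hsts)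
  have hM : ∀ s, 0 ≤ s → s ≤ ts → ∀ j ∈ Normal, x j s ≤ C := by
    intro s hs0 hsts j hj
    rcases eq_or_lt_of_le hsts with rfl | hslt
    · rcases eq_or_lt_of_le hs0 with rfl | hspos
      · have : x j 0 ≤ M0 := Finset.le_sup' (fun k => x k 0) hj
        simp only [hC]; linarith
      · have hne : (𝓝[Set.Ico 0 s] s).NeBot := by
          apply mem_closure_iff_nhdsWithin_neBot.mp
          rw [closure_Ico (ne_of_lt hspos)]
          exact ⟨hs0, le_rfl⟩
        have htd : Tendsto (x j) (𝓝[Set.Ico 0 s] s) (𝓝 (x j s)) := by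
          have h1 : ContinuousWithinAt (x j) (Set.Icc 0 t0) s :=
            (hcont j hj t0 ht0) s ⟨hs0, hsts.trans htst0⟩
          exact h1.mono (fun r hr => ⟨hr.1, hr.2.le.trans (hsts.trans htst0)⟩)
        refine le_of_tendsto htd ?_
        filter_upwards [self_mem_nhdsWithin] with r hr
        exact (hlt r hr.1 hr.2 j hj).le
    · exact (hlt s hs0 hslt j hj).le
  set g : ℝ → ℝ := fun s => C - x js s with hg
  have hgcont : ContinuousOn g (Set.Icc 0 ts) :=
    continuousOn_const.sub ((hcont js hjs t0 ht0).mono (Set.Icc_subset_Icc le_rfl htst0))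
  have hg0 : 0 < g 0 := by
    have : x js 0 ≤ M0 := Finset.le_sup' (fun k => x k 0) hjs
    simp only [hg, hC]; linarith
  have hginq : ∀ s t : ℝ, 0 ≤ s → s ≤ t → t ≤ ts → g s - g t ≤ B * ∫ r in s..t, g r := by
    intro s t hs0 hst hts'
    have ht0' : 0 ≤ t := hs0.trans hst
    have hintt : IntervalIntegrable (u js) volume 0 t := hint js hjs t ht0'
    have hints : IntervalIntegrable (u js) volume 0 s := hint js hjs s hs0
    have hintst : IntervalIntegrable (u js) volume s t := by
      apply hintt.mono_set
      rw [Set.uIcc_of_le hst, Set.uIcc_of_le ht0']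
      exact Set.Icc_subset_Icc hs0 le_rfl
    have hdiff : g s - g t = ∫ r in s..t, u js r := by
      have h1 := hsol js hjs t ht0'
      have h2 := hsol js hjs s hs0
      have h3 := intervalIntegral.integral_interval_sub_left hintt hints
      simp only [hg]
      rw [h1, h2, ← h3]
      ring
    rw [hdiff]
    have hintg : IntervalIntegrable g volume s t := by
      apply ContinuousOn.intervalIntegrable
      rw [Set.uIcc_of_le hst]
      exact hgcont.mono (Set.Icc_subset_Icc hs0 hts')
    have hintBg : IntervalIntegrable (fun r => B * g r) volume s t := hintg.const_mul B
    calc (∫ r in s..t, u js r) ≤ ∫ r in s..t, B * g r := by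
          apply intervalIntegral.integral_mono_on hst hintst hintBg
          intro r hr
          have hr0 : 0 ≤ r := hs0.trans hr.1
          have h1 := hbound js hjs r hr0
          have h2 : (Normal.sup' hNe fun j => x j r) ≤ C := by
            apply Finset.sup'_le
            intro j hj
            exact hM r hr0 (hr.2.trans hts') j hj
          have h3 : B * ((Normal.sup' hNe fun j => x j r) - x js r) ≤ B * (C - x js r) :=
            mul_le_mul_of_nonneg_left (by linarith) hB
          simpa only [hg] using h1.trans h3
      _ = B * ∫ r in s..t, g r := intervalIntegral.integral_const_mul B g
  have := gronwall_pos g ts B hB hgcont hginq hg0 ts hts0 le_rfl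
  simp only [hg] at this
  linarith

/-- Lemma 1 of the paper: under the `f'`-fraction local Byzantine model
with `f' ≤ f`, the ARC-P update of every normal agent `i` is bounded between
`B (m_N(t) - x_i(t))` and `B (M_N(t) - x_i(t))`, where
`B = β (n - 1 - min_{i ∈ N, t ≥ 0} F_i(t))`; consequently every normal state remains in
`[m_N(0), M_N(0)]` (the safety condition of CTRAC). -/
theorem stmt0 {n : ℕ}
    (Nin : ℝ → Fin n → Finset (Fin n))               -- time-varying in-neighborhoods
    (Normal : Finset (Fin n)) (hNe : Normal.Nonempty)
    (f f' : ℝ) (hf : f ∈ Set.Icc (0 : ℝ) (1 / 2)) (hf'0 : 0 ≤ f') (hf' : f' ≤ f)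
    (x : Fin n → ℝ → ℝ)                              -- agents' states
    (xc : Fin n → Fin n → ℝ → ℝ)                     -- value conveyed by j intended for i
    (hxc : ∀ j ∈ Normal, ∀ i, xc j i = x j)          -- normal agents convey their own state
    (hbyz : ∀ j i, Continuous (xc j i))              -- (Byzantine) trajectories continuous
    -- the adversary set (the non-normal agents) is an f'-fraction local set:
    (hlocal : ∀ t : ℝ, ∀ i ∈ Normal,
      ((Nin t i).filter fun j => j ∉ Normal).card ≤ ⌊f' * (((Nin t i).card : ℝ))⌋₊)
    (α β : ℝ) (hα : 0 < α) (hαβ : α ≤ β)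
    (w : ℝ → Fin n → Fin n → ℝ)
    (hw : ∀ t : ℝ, ∀ i ∈ Normal, ∀ j ∈ Nin t i, α ≤ w t j i ∧ w t j i ≤ β)
    (R : ℝ → Fin n → Finset (Fin n))
    -- R t i is a valid ARC-P removal with parameter f, i.e. F_i(t) = ⌊f ⬝ d_i(t)⌋
    (hR : ∀ t : ℝ, ∀ i ∈ Normal,
      ARCP.IsARCPRemoval (Nin t i) (fun j => xc j i t) (x i t)
        (⌊f * (((Nin t i).card : ℝ))⌋₊) (R t i))
    -- Carathéodory solution (integral form) for each normal agent
    (hint : ∀ i ∈ Normal, ∀ t : ℝ, 0 ≤ t → IntervalIntegrable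
      (fun s => ARCP.arcpUpdate (Nin s i) (R s i) (fun j => w s j i)
        (fun j => xc j i s) (x i s)) volume 0 t)
    (hsol : ∀ i ∈ Normal, ∀ t : ℝ, 0 ≤ t →
      x i t = x i 0 + ∫ s in (0 : ℝ)..t,
        ARCP.arcpUpdate (Nin s i) (R s i) (fun j => w s j i) (fun j => xc j i s) (x i s))
    -- the constant B = β (n - 1 - min_{i ∈ N, t ≥ 0} F_i(t))
    (Fmin : ℕ)
    (hFmin : Fmin = sInf {k : ℕ | ∃ i ∈ Normal, ∃ t : ℝ, 0 ≤ t ∧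
      k = ⌊f * (((Nin t i).card : ℝ))⌋₊})
    (B : ℝ) (hB : B = β * ((n : ℝ) - 1 - (Fmin : ℝ))) :
    (∀ i ∈ Normal, ∀ t : ℝ, 0 ≤ t →
      B * ((Normal.inf' hNe fun j => x j t) - x i t) ≤
        ARCP.arcpUpdate (Nin t i) (R t i) (fun j => w t j i) (fun j => xc j i t) (x i t) ∧
      ARCP.arcpUpdate (Nin t i) (R t i) (fun j => w t j i) (fun j => xc j i t) (x i t) ≤
        B * ((Normal.sup' hNe fun j => x j t) - x i t)) ∧
    (∀ i ∈ Normal, ∀ t : ℝ, 0 ≤ t →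
      x i t ∈ Set.Icc (Normal.inf' hNe fun j => x j 0) (Normal.sup' hNe fun j => x j 0)) := by
  classical
  have hβ0 : 0 ≤ β := hα.le.trans hαβ
  have hn1 : 1 ≤ n := Fin.pos hNe.choose
  -- the floor bound F_i(t) ≤ n / 2
  have hFhalf : ∀ (t : ℝ) (i : Fin n), ⌊f * (((Nin t i).card : ℝ))⌋₊ ≤ n / 2 := by
    intro t i
    have hcard : ((Nin t i).card : ℝ) ≤ (n : ℝ) := by
      exact_mod_cast (Finset.card_le_univ (Nin t i)).trans_eq (by simp)
    have h1 : f * (((Nin t i).card : ℝ)) ≤ (n : ℝ) * (1 / 2) := by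
      calc f * (((Nin t i).card : ℝ)) ≤ (1 / 2) * ((n : ℝ)) :=
            mul_le_mul hf.2 hcard (Nat.cast_nonneg _) (by norm_num)
        _ = (n : ℝ) * (1 / 2) := by ring
    calc ⌊f * (((Nin t i).card : ℝ))⌋₊ ≤ ⌊(n : ℝ) / 2⌋₊ :=
          Nat.floor_le_floor (by rw [div_eq_mul_one_div]; exact h1)
      _ = n / 2 := by
          rw [show ((n : ℝ) / 2) = ((n : ℝ) / ((2 : ℕ) : ℝ)) by norm_num,
            Nat.floor_div_natCast, Nat.floor_natCast]
  have hFminn : Fmin + 1 ≤ n := by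
    obtain ⟨i0, hi0⟩ := hNe
    have h1 : Fmin ≤ ⌊f * (((Nin 0 i0).card : ℝ))⌋₊ := by
      rw [hFmin]
      exact Nat.sInf_le ⟨i0, hi0, 0, le_rfl, rfl⟩
    have h2 := hFhalf 0 i0
    omega
  have hB0 : 0 ≤ B := by
    rw [hB]
    apply mul_nonneg hβ0
    have : (Fmin : ℝ) + 1 ≤ (n : ℝ) := by exact_mod_cast hFminn
    linarith
  -- Part 1
  have hpart1 : ∀ i ∈ Normal, ∀ t : ℝ, 0 ≤ t →
      B * ((Normal.inf' hNe fun j => x j t) - x i t) ≤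
        ARCP.arcpUpdate (Nin t i) (R t i) (fun j => w t j i) (fun j => xc j i t) (x i t) ∧
      ARCP.arcpUpdate (Nin t i) (R t i) (fun j => w t j i) (fun j => xc j i t) (x i t) ≤
        B * ((Normal.sup' hNe fun j => x j t) - x i t) := by
    intro i hi t ht
    obtain ⟨Rhi, Rlo, hRun, hhi, hlo⟩ := hR t i hi
    set F := ⌊f * (((Nin t i).card : ℝ))⌋₊ with hF
    have hw' : ∀ j ∈ Nin t i, 0 ≤ w t j i ∧ w t j i ≤ β := fun j hj =>
      ⟨hα.le.trans (hw t i hi j hj).1, (hw t i hi j hj).2⟩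
    have hadvF : ((Nin t i).filter fun j => j ∉ Normal).card ≤ F := by
      refine (hlocal t i hi).trans (Nat.floor_le_floor ?_)
      exact mul_le_mul_of_nonneg_right hf' (Nat.cast_nonneg _)
    have hFmF : Fmin ≤ F := by
      rw [hFmin]
      exact Nat.sInf_le ⟨i, hi, t, ht, rfl⟩
    have hvi : xc i i t = x i t := by rw [hxc i hi i]
    have hxiM : x i t ≤ Normal.sup' hNe fun j => x j t := Finset.le_sup' (fun j => x j t) hi
    have hmxi : (Normal.inf' hNe fun j => x j t) ≤ x i t := Finset.inf'_le (fun j => x j t) hi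
    constructor
    · -- lower bound, via arcp_upper applied to negated values
      have hfilt : ((Nin t i).filter fun j => -(x i t) < (fun j => -(xc j i t)) j)
          = ((Nin t i).filter fun j => xc j i t < x i t) := by
        apply Finset.filter_congr
        intro j _
        simp [neg_lt_neg_iff]
      have hhi' : ARCP.RemovalHigh (Nin t i) (fun j => -(xc j i t)) (-(x i t)) F Rlo := by
        obtain ⟨hRloN, hcase⟩ := hlo
        refine ⟨hRloN, ?_⟩
        rw [ARCP.RemovalHigh] at *
        rcases hcase with ⟨h1, h2⟩ | ⟨h1, h2, h3⟩
        · left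
          constructor
          · rw [hfilt]; exact h1
          · rw [hfilt]; exact h2
        · right
          refine ⟨by rw [hfilt]; exact h1, h2, ?_⟩
          intro j hj k hk
          exact neg_le_neg (h3 j hj k hk)
      have hadv' : ((Nin t i).filter fun j =>
          -(Normal.inf' hNe fun j => x j t) < (fun j => -(xc j i t)) j).card ≤ F := by
        refine le_trans (Finset.card_le_card ?_) hadvF
        intro j hj
        obtain ⟨hjN, hjlt⟩ := Finset.mem_filter.mp hj
        refine Finset.mem_filter.mpr ⟨hjN, ?_⟩
        intro hjNormal
        have : xc j i t = x j t := by rw [hxc j hjNormal i]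
        have h2 : (Normal.inf' hNe fun k => x k t) ≤ x j t :=
          Finset.inf'_le (fun k => x k t) hjNormal
        simp only [neg_lt_neg_iff, this] at hjlt
        linarith
      have hH' : ((Nin t i).filter fun j => -(x i t) < (fun j => -(xc j i t)) j).card + 1 ≤ n := by
        have hsubH : ((Nin t i).filter fun j => -(x i t) < (fun j => -(xc j i t)) j)
            ⊆ Finset.univ.erase i := by
          intro j hj
          obtain ⟨hjN, hjlt⟩ := Finset.mem_filter.mp hj
          refine Finset.mem_erase.mpr ⟨?_, Finset.mem_univ j⟩
          rintro rfl
          simp only [hvi] at hjlt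
          exact lt_irrefl _ hjlt
        have := Finset.card_le_card hsubH
        rw [Finset.card_erase_of_mem (Finset.mem_univ i), Finset.card_univ, Fintype.card_fin]
          at this
        omega
      have hup := arcp_upper (Nin t i) (R t i) Rlo (fun j => -(xc j i t)) (fun j => w t j i)
        (-(x i t)) (-(Normal.inf' hNe fun j => x j t)) F Fmin β hβ0 hw' hhi'
        (hRun ▸ Finset.subset_union_right) (neg_le_neg hmxi) hadv' hH' hFmF hFminn
      have hnegeq : ARCP.arcpUpdate (Nin t i) (R t i) (fun j => w t j i)
          (fun j => -(xc j i t)) (-(x i t))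
          = -(ARCP.arcpUpdate (Nin t i) (R t i) (fun j => w t j i)
              (fun j => xc j i t) (x i t)) := by
        rw [ARCP.arcpUpdate, ARCP.arcpUpdate, ← Finset.sum_neg_distrib]
        apply Finset.sum_congr rfl
        intro j _
        ring
      rw [hnegeq] at hup
      have hring : B * ((Normal.inf' hNe fun j => x j t) - x i t)
          = -(β * ((n : ℝ) - 1 - (Fmin : ℝ)) *
              (-(Normal.inf' hNe fun j => x j t) - -(x i t))) := by
        rw [hB]; ring
      rw [hring]
      linarith
    · -- upper bound
      have hadv' : ((Nin t i).filter fun j =>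
          (Normal.sup' hNe fun j => x j t) < (fun j => xc j i t) j).card ≤ F := by
        refine le_trans (Finset.card_le_card ?_) hadvF
        intro j hj
        obtain ⟨hjN, hjlt⟩ := Finset.mem_filter.mp hj
        refine Finset.mem_filter.mpr ⟨hjN, ?_⟩
        intro hjNormal
        have h1 : xc j i t = x j t := by rw [hxc j hjNormal i]
        have h2 : x j t ≤ Normal.sup' hNe fun k => x k t :=
          Finset.le_sup' (fun k => x k t) hjNormal
        simp only [h1] at hjlt
        linarith
      have hH' : ((Nin t i).filter fun j => x i t < (fun j => xc j i t) j).card + 1 ≤ n := by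
        have hsubH : ((Nin t i).filter fun j => x i t < (fun j => xc j i t) j)
            ⊆ Finset.univ.erase i := by
          intro j hj
          obtain ⟨hjN, hjlt⟩ := Finset.mem_filter.mp hj
          refine Finset.mem_erase.mpr ⟨?_, Finset.mem_univ j⟩
          rintro rfl
          simp only [hvi] at hjlt
          exact lt_irrefl _ hjlt
        have := Finset.card_le_card hsubH
        rw [Finset.card_erase_of_mem (Finset.mem_univ i), Finset.card_univ, Fintype.card_fin]
          at this
        omega
      have hup := arcp_upper (Nin t i) (R t i) Rhi (fun j => xc j i t) (fun j => w t j i)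
        (x i t) (Normal.sup' hNe fun j => x j t) F Fmin β hβ0 hw' hhi
        (hRun ▸ Finset.subset_union_left) hxiM hadv' hH' hFmF hFminn
      rw [hB]
      calc ARCP.arcpUpdate (Nin t i) (R t i) (fun j => w t j i) (fun j => xc j i t) (x i t)
          ≤ β * ((n : ℝ) - 1 - (Fmin : ℝ)) * ((Normal.sup' hNe fun j => x j t) - x i t) := hup
        _ = β * ((n : ℝ) - 1 - (Fmin : ℝ)) * ((Normal.sup' hNe fun j => x j t) - x i t) := rfl
  refine ⟨hpart1, ?_⟩
  -- Part 2 : safety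
  set u : Fin n → ℝ → ℝ := fun i s => ARCP.arcpUpdate (Nin s i) (R s i) (fun j => w s j i)
    (fun j => xc j i s) (x i s) with hu
  have hcont : ∀ i ∈ Normal, ∀ T : ℝ, 0 ≤ T → ContinuousOn (x i) (Set.Icc 0 T) := by
    intro i hi T hT
    have hI : IntervalIntegrable (u i) volume 0 T := hint i hi T hT
    have hprim : ContinuousOn (fun b => x i 0 + ∫ s in (0:ℝ)..b, u i s) (Set.uIcc 0 T) :=
      continuousOn_const.add
        (intervalIntegral.continuousOn_primitive_interval' hI Set.left_mem_uIcc)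
    rw [Set.uIcc_of_le hT] at hprim
    apply hprim.congr
    intro t htmem
    exact hsol i hi t htmem.1
  have hupper := safety_upper Normal hNe x u B hB0 hcont
    (fun i hi t ht => hint i hi t ht) (fun i hi t ht => hsol i hi t ht)
    (fun i hi t ht => (hpart1 i hi t ht).2)
  have hlower := safety_upper Normal hNe (fun j s => -(x j s)) (fun j s => -(u j s)) B hB0
    (fun i hi T hT => (hcont i hi T hT).neg)
    (fun i hi t ht => (hint i hi t ht).neg)
    (by
      intro i hi t ht
      have h1 := hsol i hi t ht
      show -(x i t) = -(x i 0) + ∫ s in (0:ℝ)..t, -(u i s)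
      rw [intervalIntegral.integral_neg]
      rw [hu]
      simp only []
      rw [h1]
      ring)
    (by
      intro i hi t ht
      show -(u i t) ≤ B * ((Normal.sup' hNe fun j => -(x j t)) - -(x i t))
      rw [sup'_neg_eq Normal hNe (fun j => x j t)]
      have h1 := (hpart1 i hi t ht).1
      have h2 : B * (-(Normal.inf' hNe fun j => x j t) - -(x i t))
          = -(B * ((Normal.inf' hNe fun j => x j t) - x i t)) := by ring
      rw [h2]
      exact neg_le_neg h1)
  intro i hi t ht
  constructor
  · have := hlower i hi t ht
    rw [sup'_neg_eq Normal hNe (fun j => x j 0)] at this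
    linarith
  · exact hupper i hi t ht
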